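/- For every natural number n ≥ 0 and every real x, P_n(x) = ∑_{m : n ≤ 3m and 2m ≤ n} (g̃_{m, n−2m} − g̃_{m, n−2m−1}) · m! · x^{3m−n}/(3m−n)!, where the sum is over all integers m with n/3 ≤ m ≤ n/2 and where g̃_{m,−1} is interpreted as 0 (this term occurs only when n = 2m). -/

import Mathlib

open Polynomial

/-- The pair of polynomial families `(P n, Q n)` defined by the recurrence
`P_{n+1} = P_n' + X·Q_n`, `Q_{n+1} = P_n + Q_n'` with `P_0 = 1`, `Q_0 = 0`. -/
noncomputable def airyPQ : ℕ → Polynomial ℝ × Polynomial ℝ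
  | 0 => (1, 0)
  | n + 1 =>
      ((airyPQ n).1.derivative + X * (airyPQ n).2,
       (airyPQ n).1 + (airyPQ n).2.derivative)

noncomputable def airyP (n : ℕ) : Polynomial ℝ := (airyPQ n).1
noncomputable def airyQ (n : ℕ) : Polynomial ℝ := (airyPQ n).2

/-- `g̃_{m,k}` for an integer index `k`: the `k`-th Taylor coefficient at `0` of
`(1 − t + t²/3)^{−(m+1)}` when `k ≥ 0`, and `0` when `k < 0`. -/
noncomputable def gTilde (m : ℕ) (k : ℤ) : ℝ :=
  if k < 0 then 0
  else iteratedDeriv k.toNat (fun t : ℝ => (1 - t + t ^ 2 / 3) ^ (-(m + 1 : ℤ))) 0 /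
    (Nat.factorial k.toNat : ℝ)



open Polynomial

noncomputable def ff (m : ℕ) : ℝ → ℝ := fun t : ℝ => (1 - t + t ^ 2 / 3) ^ (-(m + 1 : ℤ))

lemma upos (t : ℝ) : 0 < 1 - t + t ^ 2 / 3 := by nlinarith [sq_nonneg (t - 3/2)]

lemma ff_eq (m : ℕ) : ff m = fun t => ((1 - t + t ^ 2 / 3) ^ (m + 1))⁻¹ := by
  funext t
  rw [ff, show (-(m + 1 : ℤ)) = -((m + 1 : ℕ) : ℤ) by push_cast; ring, zpow_neg, zpow_natCast]

lemma contDiff_u : ContDiff ℝ (⊤ : ℕ∞) (fun t : ℝ => 1 - t + t ^ 2 / 3) :=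
  (contDiff_const.sub contDiff_id).add ((contDiff_id.pow 2).div_const 3)

lemma contDiff_ff (m : ℕ) : ContDiff ℝ (⊤ : ℕ∞) (ff m) := by
  rw [ff_eq]
  exact (contDiff_u.pow (m + 1)).inv fun t => pow_ne_zero _ (upos t).ne'

lemma hasDerivAt_ff (m : ℕ) (t : ℝ) :
    HasDerivAt (ff m) ((((m : ℝ) + 1) + (-(2 * ((m : ℝ) + 1)) / 3) * t) * ff (m + 1) t) t := by
  have hu : HasDerivAt (fun t : ℝ => 1 - t + t ^ 2 / 3) (-1 + 2 * t / 3) t := by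
    have h1 : HasDerivAt (fun t : ℝ => 1 - t + t ^ 2 / 3) ((0 - 1) + (2 * t ^ 1) / 3) t :=
      ((hasDerivAt_const t 1).sub (hasDerivAt_id t)).add ((hasDerivAt_pow 2 t).div_const 3)
    convert h1 using 1; ring
  have h2 := (hasDerivAt_zpow (-(m + 1 : ℤ)) (1 - t + t ^ 2 / 3) (Or.inl (upos t).ne')).comp t hu
  refine h2.congr_deriv (Eq.symm ?_)
  rw [show (-(m + 1 : ℤ) - 1) = (-(((m + 1 : ℕ) : ℤ) + 1)) by push_cast; ring]
  change _ = _ * ff (m + 1) t * _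
  push_cast
  ring

lemma deriv_ff (m : ℕ) : deriv (ff m) =
    fun t => (((m : ℝ) + 1) + (-(2 * ((m : ℝ) + 1)) / 3) * t + 0 * t ^ 2) * ff (m + 1) t := by
  funext t
  rw [(hasDerivAt_ff m t).deriv]
  ring

lemma ff_mul (m : ℕ) : ff m =
    fun t => (1 + (-1) * t + (1/3) * t ^ 2) * ff (m + 1) t := by
  funext t
  rw [ff_eq, ff_eq]
  have h := (upos t).ne'
  show ((1 - t + t ^ 2 / 3) ^ (m + 1))⁻¹ =
    (1 + (-1) * t + (1/3) * t ^ 2) * ((1 - t + t ^ 2 / 3) ^ (m + 1 + 1))⁻¹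
  rw [show (1 + (-1) * t + (1/3) * t ^ 2 : ℝ) = 1 - t + t ^ 2 / 3 from by ring,
    pow_succ (1 - t + t ^ 2 / 3) (m + 1), mul_inv_rev, ← mul_assoc, mul_inv_cancel₀ h, one_mul]
section Leib

variable {h : ℝ → ℝ}

lemma hD (hh : ContDiff ℝ (⊤ : ℕ∞) h) (j : ℕ) (t : ℝ) :
    HasDerivAt (iteratedDeriv j h) (iteratedDeriv (j + 1) h t) t := by
  rw [iteratedDeriv_succ]
  exact ((hh.differentiable_iteratedDeriv j
    ((WithTop.coe_lt_coe.2 (WithTop.coe_lt_top j)).trans_eq (by norm_cast))) t).hasDerivAt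

lemma hq' (a b c t : ℝ) :
    HasDerivAt (fun s : ℝ => a + b * s + c * s ^ 2) (b + 2 * c * t) t := by
  have := ((hasDerivAt_const t a).fun_add ((hasDerivAt_id t).const_mul b)).fun_add
    ((hasDerivAt_pow 2 t).const_mul c)
  exact this.congr_deriv (by ring)

lemma hlin' (b c t : ℝ) : HasDerivAt (fun s : ℝ => b + c * s) c t := by
  have := (hasDerivAt_const t b).fun_add ((hasDerivAt_id t).const_mul c)
  exact this.congr_deriv (by ring)

lemma leib1 (a b c : ℝ) (hh : ContDiff ℝ (⊤ : ℕ∞) h) :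
    deriv (fun s => (a + b * s + c * s ^ 2) * h s) = fun t =>
      (a + b * t + c * t ^ 2) * deriv h t + (b + 2 * c * t) * h t := by
  funext t
  have hht : HasDerivAt h (deriv h t) t := ((hh.differentiable (by simp)) t).hasDerivAt
  rw [((hq' a b c t).fun_mul hht).deriv]; ring

lemma leib (a b c : ℝ) (hh : ContDiff ℝ (⊤ : ℕ∞) h) (k : ℕ) :
    iteratedDeriv (k + 2) (fun s => (a + b * s + c * s ^ 2) * h s) = fun t =>
      (a + b * t + c * t ^ 2) * iteratedDeriv (k + 2) h t
      + ((k : ℝ) + 2) * (b + 2 * c * t) * iteratedDeriv (k + 1) h t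
      + ((k : ℝ) + 2) * ((k : ℝ) + 1) * c * iteratedDeriv k h t := by
  induction k with
  | zero =>
    rw [iteratedDeriv_succ, iteratedDeriv_one, leib1 a b c hh]
    funext t
    have h1 : HasDerivAt (deriv h) (iteratedDeriv 2 h t) t := by
      have := hD hh 1 t
      rwa [iteratedDeriv_one] at this
    have h0 : HasDerivAt h (iteratedDeriv 1 h t) t := by
      have := hD hh 0 t
      rwa [iteratedDeriv_zero] at this
    have hlin : HasDerivAt (fun s : ℝ => b + 2 * c * s) (2 * c) t := hlin' b (2*c) t
    rw [(((hq' a b c t).fun_mul h1).fun_add (hlin.fun_mul h0)).deriv]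
    rw [show (1 : ℕ) + 1 = 2 from rfl, iteratedDeriv_one, iteratedDeriv_zero]
    push_cast; ring
  | succ k ih =>
    show iteratedDeriv ((k + 2) + 1) _ = _
    rw [iteratedDeriv_succ, ih]
    funext t
    have h2 := (hq' a b c t).fun_mul (hD hh (k + 2) t)
    have hlin : HasDerivAt (fun s : ℝ => ((k : ℝ) + 2) * (b + 2 * c * s))
        (((k : ℝ) + 2) * (2 * c)) t := (hlin' b (2*c) t).const_mul ((k : ℝ) + 2)
    have h1 := hlin.fun_mul (hD hh (k + 1) t)
    have h0 := (hD hh k t).const_mul (((k : ℝ) + 2) * ((k : ℝ) + 1) * c)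
    rw [((h2.fun_add h1).fun_add h0).deriv]
    rw [show (k + 2) + 1 = k + 3 from rfl, show (k + 1) + 1 = k + 2 from rfl]
    show _ = _ * iteratedDeriv (k + 3) h t + _ * iteratedDeriv (k + 2) h t
      + _ * iteratedDeriv (k + 1) h t
    push_cast; ring

end Leib
noncomputable def gg (m k : ℕ) : ℝ := iteratedDeriv k (ff m) 0 / (Nat.factorial k : ℝ)

lemma gTilde_coe (m k : ℕ) : gTilde m (k : ℤ) = gg m k := by
  unfold gTilde gg
  rw [if_neg (by simp), Int.toNat_natCast]
  rfl

lemma gTilde_neg (m : ℕ) (k : ℤ) (hk : k < 0) : gTilde m k = 0 := if_pos hk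

lemma gg_zero (m : ℕ) : gg m 0 = 1 := by
  simp only [gg, iteratedDeriv_zero, ff, Nat.factorial_zero]
  norm_num

lemma fact_ne (k : ℕ) : (Nat.factorial k : ℝ) ≠ 0 := by positivity

lemma A0 (m : ℕ) : gg m 1 = ((m : ℝ) + 1) * gg (m + 1) 0 := by
  simp only [gg, iteratedDeriv_one, iteratedDeriv_zero, deriv_ff, Nat.factorial_one,
    Nat.factorial_zero]
  push_cast
  ring

lemma Agen (m k : ℕ) :
    ((k : ℝ) + 2) * gg m (k + 2) = ((m : ℝ) + 1) * (gg (m + 1) (k + 1) - 2/3 * gg (m + 1) k) := by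
  have hD2 : iteratedDeriv (k + 2) (ff m) 0
      = ((m : ℝ) + 1) * iteratedDeriv (k + 1) (ff (m + 1)) 0
        + ((k : ℝ) + 1) * (-(2 * ((m : ℝ) + 1)) / 3) * iteratedDeriv k (ff (m + 1)) 0 := by
    rw [show k + 2 = (k + 1) + 1 from rfl, iteratedDeriv_succ', deriv_ff]
    cases k with
    | zero =>
      simp only [Nat.zero_add, iteratedDeriv_one, leib1 _ _ _ (contDiff_ff (m + 1)), iteratedDeriv_zero]
      push_cast; ring
    | succ j =>
      simp only [show j + 1 + 1 = j + 2 from rfl, leib _ _ _ (contDiff_ff (m + 1)) j]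
      push_cast; ring
  have h1 : ((k : ℝ) + 1) ≠ 0 := by positivity
  have h2 : ((k : ℝ) + 2) ≠ 0 := by positivity
  simp only [gg]
  rw [hD2]
  push_cast [Nat.factorial_succ]
  field_simp [fact_ne k]
  ring

lemma B0 (m : ℕ) : gg m 0 = gg (m + 1) 0 := by
  simp only [gg, iteratedDeriv_zero, Nat.factorial_zero]
  rw [ff_mul m]
  norm_num

lemma B1 (m : ℕ) : gg m 1 = gg (m + 1) 1 - gg (m + 1) 0 := by
  simp only [gg, Nat.factorial_one, Nat.factorial_zero]
  rw [ff_mul m]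
  simp only [iteratedDeriv_one, leib1 _ _ _ (contDiff_ff (m + 1)), iteratedDeriv_zero]
  push_cast; ring

lemma Bgen (m k : ℕ) :
    gg m (k + 2) = gg (m + 1) (k + 2) - gg (m + 1) (k + 1) + gg (m + 1) k / 3 := by
  have hD2 : iteratedDeriv (k + 2) (ff m) 0
      = iteratedDeriv (k + 2) (ff (m + 1)) 0
        + ((k : ℝ) + 2) * (-1) * iteratedDeriv (k + 1) (ff (m + 1)) 0
        + ((k : ℝ) + 2) * ((k : ℝ) + 1) * (1/3) * iteratedDeriv k (ff (m + 1)) 0 := by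
    rw [ff_mul m]
    simp only [leib _ _ _ (contDiff_ff (m + 1)) k]
    push_cast; ring
  have h1 : ((k : ℝ) + 1) ≠ 0 := by positivity
  have h2 : ((k : ℝ) + 2) ≠ 0 := by positivity
  simp only [gg]
  rw [hD2]
  push_cast [Nat.factorial_succ]
  field_simp [fact_ne k]
  ring

/-- Identity I, boundary form `K = 0`. -/
lemma I0 (m : ℕ) : ((m : ℝ) + 1) * (gg (m + 1) 1 - 2 * gg (m + 1) 0) = (m : ℝ) * gg m 1 := by
  have h1 := A0 m
  have h2 := B1 m
  linear_combination h1 - ((m : ℝ) + 1) * h2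

/-- Identity I, main form. -/
lemma Imain (m k : ℕ) :
    ((m : ℝ) + 1) * (gg (m + 1) (k + 2) - 2 * gg (m + 1) (k + 1) + gg (m + 1) k)
      = ((m : ℝ) - (k : ℝ) - 1) * gg m (k + 2) := by
  have h1 := Agen m k
  have h2 := Bgen m k
  linear_combination h1 - ((m : ℝ) + 1) * h2
lemma fact_pos (k : ℕ) : (0:ℝ) < (Nat.factorial k : ℝ) := by positivity

lemma coefAbs (g0 g1 g2 gq R F0 Fm' : ℝ) (M : ℝ)
    (hI : (M+1) * (g2 - 2*g1 + g0) = (R+1) * gq)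
    (hF0 : F0 ≠ 0) (hR1 : (R+1) ≠ 0) (hR2 : (R+2) ≠ 0) :
    (g1 - g0) * ((M+1)*Fm') / ((R+2)*((R+1)*F0)) * (R+2) + gq * Fm' / F0
      = (g2 - g1) * ((M+1)*Fm') / ((R+1)*F0) := by
  field_simp
  linear_combination (-Fm') * hI

lemma coefAbs0 (g0 g1 gq R F0 : ℝ)
    (hI : (R+2) * (g1 - 2*g0) = (R+1) * gq)
    (hF0 : F0 ≠ 0) (hR1 : (R+1) ≠ 0) (hR2 : (R+2) ≠ 0) :
    g0 * ((R+2)*((R+1)*F0)) / ((R+2)*((R+1)*F0)) * (R+2) + gq * ((R+1)*F0) / F0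
      = (g1 - g0) * ((R+2)*((R+1)*F0)) / ((R+1)*F0) := by
  field_simp
  linear_combination (-1:ℝ) * hI

/-- main P-step coefficient identity, interior case. -/
lemma coefMain1 (κ r : ℕ) :
    (gg (κ+r+3) (κ+1) - gg (κ+r+3) κ) * (Nat.factorial (κ+r+3) : ℝ) /
        (Nat.factorial (r+2) : ℝ) * ((r+2 : ℕ) : ℝ)
      + gg (κ+r+2) (κ+2) * (Nat.factorial (κ+r+2) : ℝ) / (Nat.factorial r : ℝ)
    = (gg (κ+r+3) (κ+2) - gg (κ+r+3) (κ+1)) * (Nat.factorial (κ+r+3) : ℝ) /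
        (Nat.factorial (r+1) : ℝ) := by
  have hI := Imain (κ+r+2) κ
  rw [show κ+r+2+1 = κ+r+3 from rfl] at hI
  push_cast at hI
  have hI' : (((κ:ℝ)+(r:ℝ)+2)+1) * (gg (κ+r+3) (κ+2) - 2*gg (κ+r+3) (κ+1) + gg (κ+r+3) κ)
      = ((r:ℝ)+1) * gg (κ+r+2) (κ+2) := by linear_combination hI
  have hFm : (Nat.factorial (κ+r+3) : ℝ) = (((κ:ℝ)+(r:ℝ)+2)+1) * (Nat.factorial (κ+r+2) : ℝ) := by
    rw [show κ+r+3 = (κ+r+2)+1 from rfl, Nat.factorial_succ]; push_cast; ring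
  have hF2 : ((Nat.factorial (r+2) : ℕ) : ℝ)
      = ((r:ℝ)+2) * (((r:ℝ)+1) * (Nat.factorial r : ℝ)) := by
    rw [show r+2 = (r+1)+1 from rfl, Nat.factorial_succ, Nat.factorial_succ]; push_cast; ring
  have hF1 : ((Nat.factorial (r+1) : ℕ) : ℝ) = ((r:ℝ)+1) * (Nat.factorial r : ℝ) := by
    rw [Nat.factorial_succ]; push_cast; ring
  rw [hFm, hF2, hF1]
  push_cast
  linear_combination coefAbs (gg (κ+r+3) κ) (gg (κ+r+3) (κ+1)) (gg (κ+r+3) (κ+2))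
    (gg (κ+r+2) (κ+2)) (r:ℝ) (Nat.factorial r : ℝ) (Nat.factorial (κ+r+2) : ℝ)
    ((κ:ℝ)+(r:ℝ)+2) hI' (fact_pos r).ne' (by positivity) (by positivity)

/-- main P-step coefficient identity, boundary case K = 0. -/
lemma coefMain0 (r : ℕ) :
    gg (r+2) 0 * (Nat.factorial (r+2) : ℝ) / (Nat.factorial (r+2) : ℝ) * ((r+2 : ℕ) : ℝ)
      + gg (r+1) 1 * (Nat.factorial (r+1) : ℝ) / (Nat.factorial r : ℝ)
    = (gg (r+2) 1 - gg (r+2) 0) * (Nat.factorial (r+2) : ℝ) / (Nat.factorial (r+1) : ℝ) := by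
  have hI := I0 (r+1)
  rw [show r+1+1 = r+2 from rfl] at hI
  push_cast at hI
  have hI' : (((r:ℝ))+2) * (gg (r+2) 1 - 2*gg (r+2) 0) = ((r:ℝ)+1) * gg (r+1) 1 := by
    linear_combination hI
  have hF2 : (Nat.factorial (r+2) : ℝ)
      = ((r:ℝ)+2) * (((r:ℝ)+1) * (Nat.factorial r : ℝ)) := by
    rw [show r+2 = (r+1)+1 from rfl, Nat.factorial_succ, Nat.factorial_succ]; push_cast; ring
  have hF1 : (Nat.factorial (r+1) : ℝ) = ((r:ℝ)+1) * (Nat.factorial r : ℝ) := by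
    rw [Nat.factorial_succ]; push_cast; ring
  rw [hF2, hF1]
  push_cast
  linear_combination coefAbs0 (gg (r+2) 0) (gg (r+2) 1) (gg (r+1) 1) (r:ℝ)
    (Nat.factorial r : ℝ) hI' (fact_pos r).ne' (by positivity) (by positivity)

/-- edge case 3m = n+1 : second differences of `gg m ·` vanish at `k = m - 1`. -/
lemma coefEdge1 (κ : ℕ) :
    gg (κ+2) (κ+2) - 2*gg (κ+2) (κ+1) + gg (κ+2) κ = 0 := by
  have h := Imain (κ+1) κ
  push_cast at h
  have h' : ((κ:ℝ)+2) * (gg (κ+1+1) (κ+2) - 2*gg (κ+1+1) (κ+1) + gg (κ+1+1) κ) = 0 := by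
    linear_combination h
  rw [show κ+1+1 = κ+2 from rfl] at h'
  have := (mul_eq_zero.1 h').resolve_left (by positivity)
  linarith

lemma coefEdge1b : gg 1 1 - 2 * gg 1 0 = 0 := by
  have h := I0 0
  push_cast at h
  linarith [h]

/-- Q-step coefficient identity. -/
lemma coefQ (M e : ℕ) (g a : ℝ) :
    (g - a) * (Nat.factorial M : ℝ) / (Nat.factorial e : ℝ)
      + a * (Nat.factorial M : ℝ) / (Nat.factorial (e+1) : ℝ) * ((e+1 : ℕ) : ℝ)
    = g * (Nat.factorial M : ℝ) / (Nat.factorial e : ℝ) := by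
  rw [Nat.factorial_succ]
  push_cast
  have h1 : (Nat.factorial e : ℝ) ≠ 0 := (fact_pos e).ne'
  have h2 : ((e:ℝ)+1) ≠ 0 := by positivity
  field_simp
  ring

noncomputable def PpT (n m : ℕ) : Polynomial ℝ :=
  if n ≤ 3*m ∧ 2*m ≤ n then
    C ((gTilde m ((n:ℤ) - 2*m) - gTilde m ((n:ℤ) - 2*m - 1)) * (Nat.factorial m : ℝ) /
      (Nat.factorial (3*m - n) : ℝ)) * X ^ (3*m - n) else 0

noncomputable def QpT (n m : ℕ) : Polynomial ℝ :=
  if n ≤ 3*m + 1 ∧ 2*m + 1 ≤ n then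
    C (gTilde m ((n:ℤ) - 2*m - 1) * (Nat.factorial m : ℝ) /
      (Nat.factorial (3*m + 1 - n) : ℝ)) * X ^ (3*m + 1 - n) else 0

noncomputable def Pp (n : ℕ) : Polynomial ℝ := ∑ m ∈ Finset.range (n+1), PpT n m
noncomputable def Qp (n : ℕ) : Polynomial ℝ := ∑ m ∈ Finset.range (n+1), QpT n m

lemma Pp_ext (n N : ℕ) (h : n+1 ≤ N) : Pp n = ∑ m ∈ Finset.range N, PpT n m := by
  refine Finset.sum_subset (Finset.range_subset_range.2 h) fun x hx hnx => ?_
  unfold PpT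
  rw [if_neg]
  rintro ⟨h1, h2⟩
  exact hnx (Finset.mem_range.2 (by omega))

lemma Qp_ext (n N : ℕ) (h : n+1 ≤ N) : Qp n = ∑ m ∈ Finset.range N, QpT n m := by
  refine Finset.sum_subset (Finset.range_subset_range.2 h) fun x hx hnx => ?_
  unfold QpT
  rw [if_neg]
  rintro ⟨h1, h2⟩
  exact hnx (Finset.mem_range.2 (by omega))

lemma shiftX (n : ℕ) : ∑ m ∈ Finset.range (n+2), X * QpT n m
    = ∑ m ∈ Finset.range (n+2), (if m = 0 then 0 else X * QpT n (m-1)) := by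
  conv_lhs => rw [Finset.sum_range_succ]
  conv_rhs => rw [Finset.sum_range_succ']
  have : QpT n (n+1) = 0 := by unfold QpT; rw [if_neg (by omega)]
  simp [this]

lemma X_mul_CX (b : ℝ) (p : ℕ) : X * (C b * X ^ p) = C b * X ^ (p+1) := by ring

lemma stepQ (n : ℕ) : Pp n + derivative (Qp n) = Qp (n + 1) := by
  rw [Pp_ext n (n+2) (by omega), Qp_ext n (n+2) (by omega), Qp_ext (n+1) (n+2) (by omega),
    derivative_sum, ← Finset.sum_add_distrib]
  refine Finset.sum_congr rfl fun m _ => ?_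
  unfold PpT QpT
  simp only [apply_ite derivative, derivative_mul, derivative_C, zero_mul, zero_add,
    derivative_X_pow, derivative_zero]
  by_cases h1 : n ≤ 3*m
  · by_cases h2 : 2*m ≤ n
    · by_cases h3 : 2*m+1 ≤ n
      · rw [if_pos (⟨h1, h2⟩ : n ≤ 3*m ∧ 2*m ≤ n), if_pos (⟨by omega, h3⟩ :
            n ≤ 3*m+1 ∧ 2*m+1 ≤ n),
          if_pos (⟨by omega, by omega⟩ : n+1 ≤ 3*m+1 ∧ 2*m+1 ≤ n+1)]
        rw [show 3*m+1-(n+1) = 3*m-n from by omega, show 3*m+1-n = (3*m-n)+1 from by omega,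
          Nat.add_sub_cancel]
        rw [show ((n+1:ℕ):ℤ) - 2*m - 1 = (((n-2*m:ℕ)):ℤ) from by omega,
          show (n:ℤ) - 2*m - 1 = (((n-(2*m+1):ℕ)):ℤ) from by omega,
          show (n:ℤ) - 2*m = (((n-2*m:ℕ)):ℤ) from by omega]
        simp only [gTilde_coe]
        rw [← mul_assoc, ← C_mul, ← add_mul, ← C_add]
        congr 1
        exact congrArg C (coefQ m (3*m-n) (gg m (n-2*m)) (gg m (n-(2*m+1))))
      · rw [if_pos (⟨h1, h2⟩ : n ≤ 3*m ∧ 2*m ≤ n),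
          if_neg (show ¬(n ≤ 3*m+1 ∧ 2*m+1 ≤ n) from by omega),
          if_pos (⟨by omega, by omega⟩ : n+1 ≤ 3*m+1 ∧ 2*m+1 ≤ n+1), add_zero]
        rw [show 3*m+1-(n+1) = 3*m-n from by omega,
          show (n:ℤ) - 2*m - 1 = (-1 : ℤ) from by omega, gTilde_neg m (-1) (by norm_num), sub_zero,
          show ((n+1:ℕ):ℤ) - 2*m - 1 = (n:ℤ) - 2*m from by push_cast; ring]
    · rw [if_neg (show ¬(n ≤ 3*m ∧ 2*m ≤ n) from by omega),
        if_neg (show ¬(n ≤ 3*m+1 ∧ 2*m+1 ≤ n) from by omega),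
        if_neg (show ¬(n+1 ≤ 3*m+1 ∧ 2*m+1 ≤ n+1) from by omega), add_zero]
  · by_cases h4 : n ≤ 3*m+1
    · rw [if_neg (show ¬(n ≤ 3*m ∧ 2*m ≤ n) from by omega),
        if_neg (show ¬(n+1 ≤ 3*m+1 ∧ 2*m+1 ≤ n+1) from by omega), zero_add]
      by_cases h5 : 2*m+1 ≤ n
      · rw [if_pos (⟨h4, h5⟩ : n ≤ 3*m+1 ∧ 2*m+1 ≤ n), show 3*m+1-n = 0 from by omega]
        simp
      · rw [if_neg (show ¬(n ≤ 3*m+1 ∧ 2*m+1 ≤ n) from by omega)]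
    · rw [if_neg (show ¬(n ≤ 3*m ∧ 2*m ≤ n) from by omega),
        if_neg (show ¬(n ≤ 3*m+1 ∧ 2*m+1 ≤ n) from by omega),
        if_neg (show ¬(n+1 ≤ 3*m+1 ∧ 2*m+1 ≤ n+1) from by omega), add_zero]

lemma stepP (n : ℕ) : derivative (Pp n) + X * Qp n = Pp (n + 1) := by
  rw [Pp_ext n (n+2) (by omega), Qp_ext n (n+2) (by omega), Pp_ext (n+1) (n+2) (by omega),
    derivative_sum, Finset.mul_sum, shiftX, ← Finset.sum_add_distrib]
  refine Finset.sum_congr rfl fun m _ => ?_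
  rcases Nat.eq_zero_or_pos m with hm0 | hm0
  · subst hm0
    rw [if_pos rfl]
    unfold PpT
    simp only [apply_ite derivative, derivative_mul, derivative_C, zero_mul, zero_add,
      derivative_X_pow, derivative_zero]
    rw [if_neg (show ¬(n+1 ≤ 3*0 ∧ 2*0 ≤ n+1) from by omega)]
    by_cases hn : n = 0
    · subst hn
      rw [if_pos (show (0:ℕ) ≤ 3*0 ∧ 2*0 ≤ 0 from by omega)]
      simp
    · rw [if_neg (show ¬(n ≤ 3*0 ∧ 2*0 ≤ n) from by omega)]
      simp
  · rw [if_neg (show ¬(m = 0) from by omega)]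
    unfold PpT QpT
    simp only [apply_ite derivative, derivative_mul, derivative_C, zero_mul, zero_add,
      derivative_X_pow, derivative_zero, mul_ite, mul_zero]
    by_cases hA : n+1 ≤ 3*m
    · by_cases hB : 2*m ≤ n+1
      · rw [if_pos (⟨hA, hB⟩ : n+1 ≤ 3*m ∧ 2*m ≤ n+1)]
        by_cases hC : n+2 ≤ 3*m
        · rw [if_pos (show n ≤ 3*(m-1)+1 ∧ 2*(m-1)+1 ≤ n from by omega)]
          by_cases hD : 2*m ≤ n
          · rw [if_pos (⟨by omega, hD⟩ : n ≤ 3*m ∧ 2*m ≤ n)]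
            obtain ⟨K, hK⟩ : ∃ K, n = 2*m + K := ⟨n - 2*m, by omega⟩
            obtain ⟨e1, he1⟩ : ∃ e, 3*m = n + 2 + e := ⟨3*m - (n+2), by omega⟩
            rcases Nat.eq_zero_or_pos K with hK0 | hK0
            · -- K = 0 : boundary case
              rw [show (n:ℤ) - 2*↑m - 1 = (-1:ℤ) from by omega, gTilde_neg m (-1) (by norm_num),
                sub_zero,
                show ((n+1:ℕ):ℤ) - 2*↑m - 1 = ((0:ℕ):ℤ) from by omega,
                show (n:ℤ) - 2*↑(m-1) - 1 = ((1:ℕ):ℤ) from by omega,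
                show (n:ℤ) - 2*↑m = ((0:ℕ):ℤ) from by omega,
                show ((n+1:ℕ):ℤ) - 2*↑m = ((1:ℕ):ℤ) from by omega]
              simp only [gTilde_coe]
              rw [show m = e1+2 from by omega]
              rw [show 3*(e1+2)-n-1 = 3*(e1+2)-(n+1) from by omega,
                show 3*(e1+2)-n = e1+2 from by omega,
                show 3*(e1+2)-(n+1) = e1+1 from by omega,
                show 3*((e1+2)-1)+1-n = e1 from by omega,
                show (e1+2)-1 = e1+1 from by omega]
              rw [← mul_assoc, ← C_mul, X_mul_CX, ← add_mul, ← C_add]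
              congr 1
              exact congrArg C (coefMain0 e1)
            · -- K ≥ 1 : interior case
              obtain ⟨κ, rfl⟩ : ∃ κ, K = κ+1 := ⟨K-1, by omega⟩
              rw [show (n:ℤ) - 2*↑m - 1 = ((κ:ℕ):ℤ) from by omega,
                show ((n+1:ℕ):ℤ) - 2*↑m - 1 = ((κ+1:ℕ):ℤ) from by omega,
                show (n:ℤ) - 2*↑(m-1) - 1 = ((κ+2:ℕ):ℤ) from by omega,
                show (n:ℤ) - 2*↑m = ((κ+1:ℕ):ℤ) from by omega,
                show ((n+1:ℕ):ℤ) - 2*↑m = ((κ+2:ℕ):ℤ) from by omega]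
              simp only [gTilde_coe]
              rw [show m = κ+e1+3 from by omega]
              rw [show 3*(κ+e1+3)-n-1 = 3*(κ+e1+3)-(n+1) from by omega,
                show 3*(κ+e1+3)-n = e1+2 from by omega,
                show 3*(κ+e1+3)-(n+1) = e1+1 from by omega,
                show 3*((κ+e1+3)-1)+1-n = e1 from by omega,
                show (κ+e1+3)-1 = κ+e1+2 from by omega]
              rw [← mul_assoc, ← C_mul, X_mul_CX, ← add_mul, ← C_add]
              congr 1
              exact congrArg C (coefMain1 κ e1)
          · -- 2m = n+1 : EDGE2
            rw [if_neg (show ¬(n ≤ 3*m ∧ 2*m ≤ n) from by omega), zero_add]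
            obtain ⟨p, rfl⟩ : ∃ p, m = p+1 := ⟨m-1, by omega⟩
            rw [show ((n+1:ℕ):ℤ) - 2*↑(p+1) - 1 = (-1:ℤ) from by omega,
              gTilde_neg (p+1) (-1) (by norm_num), sub_zero,
              show (n:ℤ) - 2*↑((p+1)-1) - 1 = ((0:ℕ):ℤ) from by omega,
              show ((n+1:ℕ):ℤ) - 2*↑(p+1) = ((0:ℕ):ℤ) from by omega]
            simp only [gTilde_coe]
            rw [show (p+1)-1 = p from rfl, show 3*p+1-n = p from by omega,
              show 3*(p+1)-(n+1) = p+1 from by omega]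
            rw [gg_zero, gg_zero, X_mul_CX]
            rw [one_mul, one_mul, div_self (fact_pos p).ne', div_self (fact_pos (p+1)).ne']
        · rw [if_neg (show ¬(n ≤ 3*(m-1)+1 ∧ 2*(m-1)+1 ≤ n) from by omega)]
          by_cases hD : 2*m ≤ n
          · rw [if_pos (⟨by omega, hD⟩ : n ≤ 3*m ∧ 2*m ≤ n), add_zero]
            obtain ⟨p, rfl⟩ : ∃ p, m = p+1 := ⟨m-1, by omega⟩
            rw [show 3*(p+1)-n-1 = 0 from by omega, show 3*(p+1)-n = 1 from by omega,
              show 3*(p+1)-(n+1) = 0 from by omega]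
            rcases Nat.eq_zero_or_pos p with hp0 | hp0
            · subst hp0
              rw [show (0:ℕ)+1 = 1 from rfl]
              rw [show (n:ℤ) - 2*((1:ℕ):ℤ) - 1 = (-1:ℤ) from by omega,
                gTilde_neg 1 (-1) (by norm_num), sub_zero,
                show ((n+1:ℕ):ℤ) - 2*((1:ℕ):ℤ) - 1 = ((0:ℕ):ℤ) from by omega,
                show (n:ℤ) - 2*((1:ℕ):ℤ) = ((0:ℕ):ℤ) from by omega,
                show ((n+1:ℕ):ℤ) - 2*((1:ℕ):ℤ) = ((1:ℕ):ℤ) from by omega]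
              simp only [gTilde_coe]
              rw [← mul_assoc, ← C_mul]
              congr 1
              rw [C_inj]
              simp only [Nat.factorial_one, Nat.factorial_zero, Nat.cast_one, div_one, mul_one]
              linear_combination (-1 : ℝ) * coefEdge1b
            · obtain ⟨κ, rfl⟩ : ∃ κ, p = κ+1 := ⟨p-1, by omega⟩
              rw [show (n:ℤ) - 2*↑(κ+1+1) - 1 = ((κ:ℕ):ℤ) from by omega,
                show ((n+1:ℕ):ℤ) - 2*↑(κ+1+1) - 1 = ((κ+1:ℕ):ℤ) from by omega,
                show (n:ℤ) - 2*↑(κ+1+1) = ((κ+1:ℕ):ℤ) from by omega,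
                show ((n+1:ℕ):ℤ) - 2*↑(κ+1+1) = ((κ+2:ℕ):ℤ) from by omega]
              simp only [gTilde_coe]
              rw [show κ+1+1 = κ+2 from rfl]
              rw [← mul_assoc, ← C_mul]
              congr 1
              rw [C_inj]
              simp only [Nat.factorial_one, Nat.factorial_zero, Nat.cast_one, div_one, mul_one]
              linear_combination (-(Nat.factorial (κ+2) : ℝ)) * coefEdge1 κ
          · exact absurd (by omega : (1:ℕ) = 0) (by omega)
      · rw [if_neg (show ¬(n ≤ 3*m ∧ 2*m ≤ n) from by omega),
          if_neg (show ¬(n ≤ 3*(m-1)+1 ∧ 2*(m-1)+1 ≤ n) from by omega),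
          if_neg (show ¬(n+1 ≤ 3*m ∧ 2*m ≤ n+1) from by omega), add_zero]
    · rw [if_neg (show ¬(n+1 ≤ 3*m ∧ 2*m ≤ n+1) from by omega),
        if_neg (show ¬(n ≤ 3*(m-1)+1 ∧ 2*(m-1)+1 ≤ n) from by omega)]
      by_cases hP : n ≤ 3*m ∧ 2*m ≤ n
      · rw [if_pos hP, show 3*m-n = 0 from by omega]
        simp
      · rw [if_neg hP]
        simp

lemma airyPQ_succ (n : ℕ) : airyPQ (n+1) =
    ((airyPQ n).1.derivative + X * (airyPQ n).2, (airyPQ n).1 + (airyPQ n).2.derivative) := rfl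

lemma key (n : ℕ) : airyP n = Pp n ∧ airyQ n = Qp n := by
  induction n with
  | zero =>
    constructor
    · show (1 : Polynomial ℝ) = _
      unfold Pp
      rw [Finset.sum_range_one]
      unfold PpT
      rw [if_pos (show (0:ℕ) ≤ 3*0 ∧ 2*0 ≤ 0 from by omega)]
      rw [show ((0:ℕ):ℤ) - 2*↑(0:ℕ) - 1 = (-1:ℤ) from by omega, gTilde_neg 0 (-1) (by norm_num),
        sub_zero, show ((0:ℕ):ℤ) - 2*↑(0:ℕ) = ((0:ℕ):ℤ) from by omega, gTilde_coe, gg_zero]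
      norm_num
    · show (0 : Polynomial ℝ) = _
      unfold Qp
      rw [Finset.sum_range_one]
      unfold QpT
      rw [if_neg (show ¬((0:ℕ) ≤ 3*0+1 ∧ 2*0+1 ≤ 0) from by omega)]
  | succ n ih =>
    obtain ⟨hP, hQ⟩ := ih
    constructor
    · show (airyPQ (n+1)).1 = _
      rw [airyPQ_succ]
      show derivative (airyP n) + X * airyQ n = _
      rw [hP, hQ, stepP]
    · show (airyPQ (n+1)).2 = _
      rw [airyPQ_succ]
      show airyP n + derivative (airyQ n) = _
      rw [hP, hQ, stepQ]

theorem airyP_explicit (n : ℕ) (x : ℝ) :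
    (airyP n).eval x =
      ∑ m ∈ (Finset.range (n + 1)).filter (fun m => n ≤ 3 * m ∧ 2 * m ≤ n),
        (gTilde m ((n : ℤ) - 2 * m) - gTilde m ((n : ℤ) - 2 * m - 1)) *
          (Nat.factorial m : ℝ) * x ^ (3 * m - n) /
          (Nat.factorial (3 * m - n) : ℝ) := by
  rw [(key n).1]
  unfold Pp
  rw [Polynomial.eval_finset_sum, Finset.sum_filter]
  refine Finset.sum_congr rfl fun m _ => ?_
  unfold PpT
  split_ifs with h
  · simp only [eval_mul, eval_C, eval_pow, eval_X]
    ring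
  · simp
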